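/- Let α be an exponential random variable with rate λ > 0, and let F : ℝ^d → ℝ be differentiable and satisfy the fundamental theorem of calculus along line segments (F(y) − F(x) = ∫₀¹ ⟨∇F(x + t(y−x)), y−x⟩ dt for all x, y). Then for any x, z ∈ ℝ^d, E[F(x + α z) − F(x)] = E[⟨∇F(x + α z), z⟩] / λ. -/

import Mathlib

open MeasureTheory ProbabilityTheory Real
open scoped Gradient RealInnerProductSpace ENNReal NNReal

lemma expo_expPDFReal_eq (l x : ℝ) :
    exponentialPDFReal l x = if 0 ≤ x then l * exp (-(l*x)) else 0 := by
  rw [exponentialPDFReal, gammaPDFReal]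
  simp only [rpow_one, Real.Gamma_one, div_one, sub_self, Real.rpow_zero, mul_one]

lemma expo_tail_int {l : ℝ} (hl : 0 < l) (s : ℝ) :
    ∫ a in Set.Ioi s, l * exp (-(l*a)) = exp (-(l*s)) := by
  have hd : ∀ a ∈ Set.Ici s, HasDerivAt (fun a : ℝ => -exp (-(l*a))) (l * exp (-(l*a))) a := by
    intro a _
    have : HasDerivAt (fun a : ℝ => -(l*a)) (-l) a := by
      simpa [Pi.neg_def] using ((hasDerivAt_id a).const_mul l).neg
    simpa [mul_comm, Pi.neg_def] using (this.exp).neg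
  have hint : IntegrableOn (fun a => l * exp (-(l*a))) (Set.Ioi s) := by
    have := (exp_neg_integrableOn_Ioi s hl).const_mul l
    simpa [neg_mul, IntegrableOn] using this
  have ht : Filter.Tendsto (fun a : ℝ => -exp (-(l*a))) Filter.atTop (nhds 0) := by
    rw [← neg_zero]
    refine Filter.Tendsto.neg ?_
    have : Filter.Tendsto (fun a : ℝ => -(l*a)) Filter.atTop Filter.atBot := by
      simpa [neg_mul] using
        (Filter.tendsto_id (α := ℝ)).const_mul_atTop_of_neg (by linarith : -l < 0)
    exact tendsto_exp_atBot.comp this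
  have := integral_Ioi_of_hasDerivAt_of_tendsto' hd hint ht
  simpa using this

lemma expo_integrableOn {l : ℝ} (hl : 0 < l) (s : ℝ) :
    IntegrableOn (fun a : ℝ => l * exp (-(l*a))) (Set.Ioi s) := by
  have := (exp_neg_integrableOn_Ioi s hl).const_mul l
  simpa [neg_mul, IntegrableOn] using this

lemma integral_expMeasure_eq {l : ℝ} (hl : 0 < l) (f : ℝ → ℝ) :
    ∫ a, f a ∂(expMeasure l) = ∫ a in Set.Ioi 0, f a * (l * exp (-(l*a))) := by
  have hmeas : Measurable (fun x => (exponentialPDFReal l x).toNNReal) :=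
    (measurable_exponentialPDFReal l).real_toNNReal
  have h1 : expMeasure l = volume.withDensity
      (fun x => ((exponentialPDFReal l x).toNNReal : ℝ≥0∞)) := rfl
  rw [h1, integral_withDensity_eq_integral_smul hmeas]
  have h2 : ∀ x : ℝ, (exponentialPDFReal l x).toNNReal • f x
      = (Set.Ici (0:ℝ)).indicator (fun a => f a * (l * exp (-(l*a)))) x := by
    intro a
    rw [NNReal.smul_def, smul_eq_mul, Real.coe_toNNReal _ (exponentialPDFReal_nonneg hl a)]
    rw [expo_expPDFReal_eq]
    rcases le_or_gt 0 a with h | h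
    · rw [if_pos h, Set.indicator_of_mem (Set.mem_Ici.mpr h)]; ring
    · rw [if_neg (not_le.mpr h), Set.indicator_of_notMem (by simpa using h.not_ge)]; ring
  rw [funext h2, integral_indicator measurableSet_Ici, integral_Ici_eq_integral_Ioi]

lemma integrable_mul_pdf {l : ℝ} (hl : 0 < l) {g : ℝ → ℝ} (hg : Integrable g (expMeasure l)) :
    IntegrableOn (fun s => g s * (l * exp (-(l*s)))) (Set.Ioi 0) := by
  have hmeas : Measurable (fun x => (exponentialPDFReal l x).toNNReal) :=
    (measurable_exponentialPDFReal l).real_toNNReal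
  have h1 : expMeasure l = volume.withDensity
      (fun x => ((exponentialPDFReal l x).toNNReal : ℝ≥0∞)) := rfl
  rw [h1, integrable_withDensity_iff_integrable_smul hmeas] at hg
  have : IntegrableOn (fun x => (exponentialPDFReal l x).toNNReal • g x) (Set.Ioi 0) :=
    hg.integrableOn
  refine this.congr_fun (fun s hs => ?_) measurableSet_Ioi
  beta_reduce
  rw [NNReal.smul_def, smul_eq_mul, Real.coe_toNNReal _ (exponentialPDFReal_nonneg hl s),
    expo_expPDFReal_eq, if_pos (le_of_lt hs)]
  ring

/-- For `α ~ Exp(l)` with rate `l > 0`, and `F` differentiable satisfying the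
fundamental theorem of calculus along segments, `E[F(x + α z) − F(x)] = E[⟨∇F(x + α z), z⟩] / l`. -/
theorem exp_random_linearization {d : ℕ} (F : EuclideanSpace ℝ (Fin d) → ℝ) (l : ℝ) (hl : 0 < l)
    (hF : Differentiable ℝ F)
    (hFTC : ∀ x y : EuclideanSpace ℝ (Fin d),
      F y - F x = ∫ t in (0:ℝ)..1, ⟪∇ F (x + t • (y - x)), y - x⟫)
    (x z : EuclideanSpace ℝ (Fin d))
    (hInt1 : Integrable (fun a : ℝ => F (x + a • z) - F x) (expMeasure l))
    (hInt2 : Integrable (fun a : ℝ => (⟪∇ F (x + a • z), z⟫ : ℝ)) (expMeasure l)) :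
    ∫ a : ℝ, (F (x + a • z) - F x) ∂(expMeasure l)
      = (∫ a : ℝ, (⟪∇ F (x + a • z), z⟫ : ℝ) ∂(expMeasure l)) / l := by
  set h : ℝ → ℝ := fun s => (⟪∇ F (x + s • z), z⟫ : ℝ) with hh
  -- integrability of h against the pdf
  have hpdfInt : IntegrableOn (fun s => h s * (l * exp (-(l*s)))) (Set.Ioi 0) :=
    integrable_mul_pdf hl hInt2
  have hnormInt : IntegrableOn (fun s => ‖h s‖ * (l * exp (-(l*s)))) (Set.Ioi 0) :=
    integrable_mul_pdf hl hInt2.norm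
  -- a.e. strong measurability of h on (0,∞)
  have hcont : Continuous (fun s : ℝ => l * exp (-(l*s))) := by fun_prop
  have hhm : AEStronglyMeasurable h (volume.restrict (Set.Ioi 0)) := by
    have hne : ∀ s : ℝ, l * exp (-(l*s)) ≠ 0 := fun s =>
      (mul_pos hl (exp_pos _)).ne'
    have : h = fun s => (h s * (l * exp (-(l*s)))) * (l * exp (-(l*s)))⁻¹ := by
      funext s; field_simp
    rw [this]
    exact hpdfInt.aestronglyMeasurable.mul (hcont.measurable.inv).aestronglyMeasurable
  -- FTC along the ray
  have hkey : ∀ a : ℝ, F (x + a • z) - F x = ∫ s in (0:ℝ)..a, h s := by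
    intro a
    have h0 := hFTC x (x + a • z)
    simp only [add_sub_cancel_left] at h0
    have e1 : ∀ t : ℝ, (⟪∇ F (x + t • (a • z)), a • z⟫ : ℝ) = a * h (t * a) := by
      intro t; rw [real_inner_smul_right, smul_smul, hh]
    rw [h0]
    simp only [e1]
    rw [intervalIntegral.integral_const_mul]
    have := intervalIntegral.smul_integral_comp_mul_right (a := (0:ℝ)) (b := 1) h a
    simpa [smul_eq_mul] using this
  -- the two-variable function
  set f : ℝ → ℝ → ℝ := fun a s => (Set.Ioc 0 a).indicator h s * (l * exp (-(l*a))) with hf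
  -- measurability of the uncurried function
  have hS : MeasurableSet {p : ℝ × ℝ | p.2 ∈ Set.Ioc 0 p.1} := by
    have : {p : ℝ × ℝ | p.2 ∈ Set.Ioc 0 p.1}
        = {p : ℝ × ℝ | 0 < p.2} ∩ {p : ℝ × ℝ | p.2 ≤ p.1} := by
      ext p; simp [Set.mem_Ioc, and_comm]
    rw [this]
    exact (measurableSet_lt measurable_const measurable_snd).inter
      (measurableSet_le measurable_snd measurable_fst)
  have hAESM : AEStronglyMeasurable (Function.uncurry f)
      ((volume.restrict (Set.Ioi 0)).prod (volume.restrict (Set.Ioi 0))) := by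
    have heq : Function.uncurry f = {p : ℝ × ℝ | p.2 ∈ Set.Ioc 0 p.1}.indicator
        (fun p : ℝ × ℝ => h p.2 * (l * exp (-(l*p.1)))) := by
      funext p
      show (Set.Ioc 0 p.1).indicator h p.2 * (l * exp (-(l*p.1))) = _
      simp only [Set.indicator_apply, Set.mem_setOf_eq]
      by_cases hp : p.2 ∈ Set.Ioc 0 p.1 <;> simp [hp]
    rw [heq]
    have h2 : AEStronglyMeasurable (fun p : ℝ × ℝ => h p.2)
        ((volume.restrict (Set.Ioi 0)).prod (volume.restrict (Set.Ioi 0))) := hhm.comp_snd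
    have h3 : AEStronglyMeasurable (fun p : ℝ × ℝ => l * exp (-(l*p.1)))
        ((volume.restrict (Set.Ioi 0)).prod (volume.restrict (Set.Ioi 0))) :=
      (hcont.comp continuous_fst).aestronglyMeasurable
    exact (h2.mul h3).indicator hS
  -- rewrite slices as indicator functions of `Ici s`
  have e2 : ∀ s ∈ Set.Ioi (0:ℝ), (fun a => f a s)
      = (Set.Ici s).indicator (fun a => h s * (l * exp (-(l*a)))) := by
    intro s hs
    funext a
    show (Set.Ioc 0 a).indicator h s * (l * exp (-(l*a))) = _
    by_cases hsa : s ≤ a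
    · rw [Set.indicator_of_mem (Set.mem_Ioc.mpr ⟨hs, hsa⟩),
        Set.indicator_of_mem (Set.mem_Ici.mpr hsa)]
    · rw [Set.indicator_of_notMem (fun hmem => hsa (Set.mem_Ioc.mp hmem).2),
        Set.indicator_of_notMem (fun hmem => hsa (Set.mem_Ici.mp hmem)), zero_mul]
  have hIciIoi : ∀ s ∈ Set.Ioi (0:ℝ), Set.Ici s ∩ Set.Ioi (0:ℝ) = Set.Ici s := by
    intro s hs
    exact Set.inter_eq_left.mpr (fun y hy => Set.mem_Ioi.mpr (lt_of_lt_of_le hs hy))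
  -- slice integrability
  have hslice : ∀ s ∈ Set.Ioi (0:ℝ),
      Integrable (fun a => f a s) (volume.restrict (Set.Ioi 0)) := by
    intro s hs
    rw [e2 s hs]
    exact (((expo_integrableOn hl 0).const_mul (h s)).indicator measurableSet_Ici)
  -- value of the slice integral
  have hsliceval : ∀ s ∈ Set.Ioi (0:ℝ),
      ∫ a in Set.Ioi 0, f a s = h s * exp (-(l*s)) := by
    intro s hs
    rw [e2 s hs, integral_indicator measurableSet_Ici,
      Measure.restrict_restrict measurableSet_Ici, hIciIoi s hs,
      integral_const_mul, integral_Ici_eq_integral_Ioi, expo_tail_int hl]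
  -- value of the slice norm integral
  have hslicenorm : ∀ s ∈ Set.Ioi (0:ℝ),
      ∫ a in Set.Ioi 0, ‖f a s‖ = ‖h s‖ * exp (-(l*s)) := by
    intro s hs
    have : (fun a => ‖f a s‖)
        = (Set.Ici s).indicator (fun a => ‖h s‖ * (l * exp (-(l*a)))) := by
      funext a
      rw [show f a s = (Set.Ici s).indicator (fun a => h s * (l * exp (-(l*a)))) a from
        congrFun (e2 s hs) a]
      rw [norm_indicator_eq_indicator_norm]
      congr 1
      funext b
      rw [norm_mul, Real.norm_eq_abs (l * _), abs_of_pos (mul_pos hl (exp_pos _))]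
    rw [this, integral_indicator measurableSet_Ici,
      Measure.restrict_restrict measurableSet_Ici, hIciIoi s hs,
      integral_const_mul, integral_Ici_eq_integral_Ioi, expo_tail_int hl]
  -- product integrability
  have hprod : Integrable (Function.uncurry f)
      ((volume.restrict (Set.Ioi 0)).prod (volume.restrict (Set.Ioi 0))) := by
    rw [integrable_prod_iff' hAESM]
    constructor
    · filter_upwards [ae_restrict_mem measurableSet_Ioi] with s hs
      exact hslice s hs
    · have hmaj : Integrable (fun s => ‖h s‖ * exp (-(l*s)))
          (volume.restrict (Set.Ioi 0)) := by
        have := hnormInt.const_mul l⁻¹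
        refine this.congr (Filter.Eventually.of_forall (fun s => ?_))
        field_simp
      refine hmaj.congr ?_
      filter_upwards [ae_restrict_mem measurableSet_Ioi] with s hs
      exact (hslicenorm s hs).symm
  -- main computation
  rw [integral_expMeasure_eq hl, integral_expMeasure_eq hl]
  have lhs_eq : ∫ a in Set.Ioi 0, (F (x + a • z) - F x) * (l * exp (-(l*a)))
      = ∫ a in Set.Ioi 0, ∫ s in Set.Ioi 0, f a s := by
    refine setIntegral_congr_fun measurableSet_Ioi (fun a ha => ?_)
    rw [hkey a, intervalIntegral.integral_of_le (le_of_lt ha)]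
    have : ∫ s in Set.Ioc 0 a, h s = ∫ s in Set.Ioi 0, (Set.Ioc 0 a).indicator h s := by
      rw [integral_indicator measurableSet_Ioc, Measure.restrict_restrict measurableSet_Ioc,
        Set.inter_eq_left.mpr Set.Ioc_subset_Ioi_self]
    rw [this, ← integral_mul_const]
  rw [lhs_eq]
  have swap : ∫ a in Set.Ioi 0, ∫ s in Set.Ioi 0, f a s
      = ∫ s in Set.Ioi 0, ∫ a in Set.Ioi 0, f a s := integral_integral_swap hprod
  rw [swap]
  have rhs_eq : ∫ s in Set.Ioi 0, ∫ a in Set.Ioi 0, f a s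
      = ∫ s in Set.Ioi 0, h s * exp (-(l*s)) :=
    setIntegral_congr_fun measurableSet_Ioi (fun s hs => hsliceval s hs)
  rw [rhs_eq]
  have : ∫ s in Set.Ioi 0, h s * (l * exp (-(l*s)))
      = (∫ s in Set.Ioi 0, h s * exp (-(l*s))) * l := by
    rw [← integral_mul_const]
    congr 1
    funext s
    ring
  rw [this, mul_div_cancel_right₀ _ hl.ne']
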